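/- Let 𝒱 be a v-transform with fulcrum δ ∈ (0,1), generator Ψ differentiable with strictly positive derivative, and conditional down probability Δ. Let d ≥ 1 and let V = (V₁,…,V_d) be a random vector in [0,1]^d with uniform one-dimensional margins whose law has density c_V with respect to Lebesgue measure on [0,1]^d. Let W₁,…,W_d be i.i.d. uniform random variables on [0,1], independent of V, and define U_i = 𝒱⁻¹_s(V_i, W_i) for i = 1,…,d. Then the law of U = (U₁,…,U_d) has density with respect to Lebesgue measure on [0,1]^d given, for a.e. (u₁,…,u_d), by c_U(u₁,…,u_d) = c_V(𝒱(u₁),…,𝒱(u_d)). -/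

import Mathlib

/-!
STATEMENT 5: density of the componentwise stochastic inversion of a v-transform
(Theorem on multivariate componentwise v-transforms, part 2):
`c_U(u₁,…,u_d) = c_V(𝒱(u₁),…,𝒱(u_d))`.
-/

open Set MeasureTheory
open scoped ENNReal

/-- The v-transform with fulcrum `δ` and generator `Ψ` (with inverse `Ψinv`):
`𝒱(u) = (1-u) - (1-δ)·Ψ(u/δ)` for `u ≤ δ` and `𝒱(u) = u - δ·Ψinv((1-u)/(1-δ))`
for `u > δ`. -/
noncomputable def vt (δ : ℝ) (Ψ Ψinv : ℝ → ℝ) (u : ℝ) : ℝ :=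
  if u ≤ δ then (1 - u) - (1 - δ) * Ψ (u / δ)
  else u - δ * Ψinv ((1 - u) / (1 - δ))

/-- Left-branch inverse `𝒱⁻¹(v) = inf {u ∈ [0,1] : 𝒱 u = v}`. -/
noncomputable def vtInv (V : ℝ → ℝ) (v : ℝ) : ℝ :=
  sInf {u | u ∈ Set.Icc (0:ℝ) 1 ∧ V u = v}

/-- Conditional down probability `Δ(v) = -1 / 𝒱′(𝒱⁻¹(v))`. -/
noncomputable def vtDelta (V : ℝ → ℝ) (v : ℝ) : ℝ :=
  -1 / deriv V (vtInv V v)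

/-- Stochastic inversion function of a v-transform:
`𝒱⁻¹ₛ(v,w) = 𝒱⁻¹(v)` if `w ≤ Δ(v)`, and `v + 𝒱⁻¹(v)` otherwise. -/
noncomputable def vtSInv (V : ℝ → ℝ) (v w : ℝ) : ℝ :=
  if w ≤ vtDelta V v then vtInv V v else v + vtInv V v


namespace VTProof

variable {δ : ℝ} {Ψ Ψinv : ℝ → ℝ}

/-- left branch -/
noncomputable def vtL (δ : ℝ) (Ψ : ℝ → ℝ) (u : ℝ) : ℝ := (1 - u) - (1 - δ) * Ψ (u / δ)

lemma vt_eq_left {u : ℝ} (h : u ≤ δ) : vt δ Ψ Ψinv u = vtL δ Ψ u := if_pos h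

lemma vt_eq_right {u : ℝ} (h : ¬ u ≤ δ) :
    vt δ Ψ Ψinv u = u - δ * Ψinv ((1 - u) / (1 - δ)) := if_neg h

lemma psi_mem (hΨm : StrictMonoOn Ψ (Icc 0 1)) (hΨ0 : Ψ 0 = 0) (hΨ1 : Ψ 1 = 1)
    {x : ℝ} (hx : x ∈ Icc (0:ℝ) 1) : Ψ x ∈ Icc (0:ℝ) 1 := by
  have h0 : (0:ℝ) ∈ Icc (0:ℝ) 1 := ⟨le_refl 0, zero_le_one⟩
  have h1 : (1:ℝ) ∈ Icc (0:ℝ) 1 := ⟨zero_le_one, le_refl 1⟩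
  exact ⟨hΨ0 ▸ hΨm.monotoneOn h0 hx hx.1, hΨ1 ▸ hΨm.monotoneOn hx h1 hx.2⟩

lemma psi_surj (hΨc : ContinuousOn Ψ (Icc 0 1)) (hΨ0 : Ψ 0 = 0) (hΨ1 : Ψ 1 = 1)
    {y : ℝ} (hy : y ∈ Icc (0:ℝ) 1) : ∃ t ∈ Icc (0:ℝ) 1, Ψ t = y := by
  have h := intermediate_value_Icc (zero_le_one (α := ℝ)) hΨc
  rw [hΨ0, hΨ1] at h
  obtain ⟨t, ht, h'⟩ := h hy
  exact ⟨t, ht, h'⟩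

lemma psiInv_mem (hΨc : ContinuousOn Ψ (Icc 0 1)) (hΨ0 : Ψ 0 = 0) (hΨ1 : Ψ 1 = 1)
    (hΨinv : ∀ x ∈ Set.Icc (0:ℝ) 1, Ψinv (Ψ x) = x ∧ Ψ (Ψinv x) = x)
    {y : ℝ} (hy : y ∈ Icc (0:ℝ) 1) : Ψinv y ∈ Icc (0:ℝ) 1 := by
  obtain ⟨t, ht, rfl⟩ := psi_surj hΨc hΨ0 hΨ1 hy
  rw [(hΨinv t ht).1]; exact ht

lemma vtL_anti (hδ : δ ∈ Ioo (0:ℝ) 1) (hΨm : StrictMonoOn Ψ (Icc 0 1)) :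
    StrictAntiOn (vtL δ Ψ) (Icc 0 δ) := by
  intro a ha b hb hab
  have hδ0 := hδ.1
  have haδ : a / δ ∈ Icc (0:ℝ) 1 :=
    ⟨div_nonneg ha.1 hδ0.le, (div_le_one hδ0).2 ha.2⟩
  have hbδ : b / δ ∈ Icc (0:ℝ) 1 :=
    ⟨div_nonneg hb.1 hδ0.le, (div_le_one hδ0).2 hb.2⟩
  have h1 : Ψ (a / δ) < Ψ (b / δ) :=
    hΨm haδ hbδ (by exact div_lt_div_of_pos_right hab hδ0)
  have h2 : (1 - δ) * Ψ (a / δ) < (1 - δ) * Ψ (b / δ) :=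
    mul_lt_mul_of_pos_left h1 (by linarith [hδ.2])
  unfold vtL; linarith

lemma vtL_zero (hΨ0 : Ψ 0 = 0) : vtL δ Ψ 0 = 1 := by simp [vtL, hΨ0]

lemma vtL_delta (hδ0 : (0:ℝ) < δ) (hΨ1 : Ψ 1 = 1) : vtL δ Ψ δ = 0 := by
  simp [vtL, div_self hδ0.ne', hΨ1]

lemma vtL_cont (hδ : δ ∈ Ioo (0:ℝ) 1) (hΨc : ContinuousOn Ψ (Icc 0 1)) :
    ContinuousOn (vtL δ Ψ) (Icc 0 δ) := by
  have h1 : ContinuousOn (fun u : ℝ => Ψ (u / δ)) (Icc 0 δ) := by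
    refine hΨc.comp ((continuous_id.div_const δ).continuousOn) ?_
    intro x hx
    exact ⟨div_nonneg hx.1 hδ.1.le, (div_le_one hδ.1).2 hx.2⟩
  exact (continuousOn_const.sub continuousOn_id).sub (continuousOn_const.mul h1)


/-- bundle of standing hypotheses -/
structure Hyp (δ : ℝ) (Ψ Ψinv : ℝ → ℝ) : Prop where
  hδ : δ ∈ Ioo (0:ℝ) 1
  hΨc : ContinuousOn Ψ (Icc 0 1)
  hΨm : StrictMonoOn Ψ (Icc 0 1)
  hΨ0 : Ψ 0 = 0
  hΨ1 : Ψ 1 = 1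
  hΨinv : ∀ x ∈ Set.Icc (0:ℝ) 1, Ψinv (Ψ x) = x ∧ Ψ (Ψinv x) = x
  hΨd : ∀ x ∈ Set.Ioo (0:ℝ) 1, DifferentiableAt ℝ Ψ x ∧ 0 < deriv Ψ x


noncomputable def clamp (x : ℝ) : ℝ := max 0 (min 1 x)

lemma clamp_mono : Monotone clamp := fun a b h =>
  max_le_max (le_refl 0) (min_le_min (le_refl 1) h)

lemma clamp_mem (x : ℝ) : clamp x ∈ Icc (0:ℝ) 1 :=
  ⟨le_max_left _ _, max_le zero_le_one (min_le_left _ _)⟩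

lemma clamp_eq {x : ℝ} (hx : x ∈ Icc (0:ℝ) 1) : clamp x = x := by
  rw [clamp, min_eq_right hx.2, max_eq_right hx.1]

noncomputable def uLext (δ : ℝ) (Ψ Ψinv : ℝ → ℝ) (v : ℝ) : ℝ :=
  vtInv (vt δ Ψ Ψinv) (clamp v)

noncomputable def DeltaE (δ : ℝ) (Ψ Ψinv : ℝ → ℝ) (v : ℝ) : ℝ :=
  -1 / deriv (vt δ Ψ Ψinv) (uLext δ Ψ Ψinv v)

noncomputable def Tm (δ : ℝ) (Ψ Ψinv : ℝ → ℝ) (p : ℝ × ℝ) : ℝ :=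
  if p.2 ≤ DeltaE δ Ψ Ψinv p.1 then uLext δ Ψ Ψinv p.1 else p.1 + uLext δ Ψ Ψinv p.1

noncomputable def vtm (δ : ℝ) (Ψ Ψinv : ℝ → ℝ) (u : ℝ) : ℝ :=
  if u ∈ Icc (0:ℝ) 1 then
    (if u ≤ δ then (1 - u) - (1 - δ) * Ψ (clamp (u / δ))
     else u - δ * Ψinv (clamp ((1 - u) / (1 - δ))))
  else 0

lemma uLext_eq {v : ℝ} (hv : v ∈ Icc (0:ℝ) 1) :
    uLext δ Ψ Ψinv v = vtInv (vt δ Ψ Ψinv) v := by rw [uLext, clamp_eq hv]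

lemma DeltaE_eq {v : ℝ} (hv : v ∈ Icc (0:ℝ) 1) :
    DeltaE δ Ψ Ψinv v = vtDelta (vt δ Ψ Ψinv) v := by
  rw [DeltaE, uLext_eq hv, vtDelta]

lemma Tm_eq {v : ℝ} (hv : v ∈ Icc (0:ℝ) 1) (w : ℝ) :
    Tm δ Ψ Ψinv (v, w) = vtSInv (vt δ Ψ Ψinv) v w := by
  rw [Tm, vtSInv, DeltaE_eq hv, uLext_eq hv]


lemma lintegral_image_1d {s : Set ℝ} {g : ℝ → ℝ} {g' : ℝ → ℝ} (hs : MeasurableSet s)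
    (hg' : ∀ x ∈ s, HasDerivWithinAt g (g' x) s x) (hinj : InjOn g s) (f : ℝ → ℝ≥0∞) :
    ∫⁻ x in g '' s, f x = ∫⁻ x in s, ENNReal.ofReal |g' x| * f (g x) := by
  simpa only [ContinuousLinearMap.det_toSpanSingleton] using
    lintegral_image_eq_lintegral_abs_det_fderiv_mul volume hs
      (fun x hx => (hg' x hx).hasFDerivWithinAt) hinj f


section WithH

variable (H : Hyp δ Ψ Ψinv)
include H

lemma exists_left {v : ℝ} (hv : v ∈ Icc (0:ℝ) 1) :
    ∃ u ∈ Icc (0:ℝ) δ, vtL δ Ψ u = v := by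
  have h := intermediate_value_Icc' H.hδ.1.le (vtL_cont H.hδ H.hΨc)
  rw [vtL_zero H.hΨ0, vtL_delta H.hδ.1 H.hΨ1] at h
  obtain ⟨u, hu, h'⟩ := h hv
  exact ⟨u, hu, h'⟩

lemma isLeast {v : ℝ} (hv : v ∈ Icc (0:ℝ) 1) :
    ∃ u0 ∈ Icc (0:ℝ) δ, vtL δ Ψ u0 = v ∧
      IsLeast {u | u ∈ Set.Icc (0:ℝ) 1 ∧ vt δ Ψ Ψinv u = v} u0 := by
  obtain ⟨u0, hu0, hu0v⟩ := exists_left H hv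
  refine ⟨u0, hu0, hu0v, ⟨⟨hu0.1, hu0.2.trans H.hδ.2.le⟩, (vt_eq_left hu0.2).trans hu0v⟩, ?_⟩
  rintro u ⟨hu, hvu⟩
  by_cases h : u ≤ δ
  · rw [vt_eq_left h] at hvu
    have := (vtL_anti H.hδ H.hΨm).injOn ⟨hu.1, h⟩ hu0 (hvu.trans hu0v.symm)
    exact this.ge
  · push_neg at h
    exact hu0.2.trans h.le

lemma vtInv_mem_and_eq {v : ℝ} (hv : v ∈ Icc (0:ℝ) 1) :
    vtInv (vt δ Ψ Ψinv) v ∈ Icc (0:ℝ) δ ∧ vtL δ Ψ (vtInv (vt δ Ψ Ψinv) v) = v := by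
  obtain ⟨u0, hm, he, hleast⟩ := isLeast H hv
  have h : vtInv (vt δ Ψ Ψinv) v = u0 := hleast.csInf_eq
  rw [h]; exact ⟨hm, he⟩

lemma vtInv_unique {v u : ℝ} (hv : v ∈ Icc (0:ℝ) 1) (hu : u ∈ Icc (0:ℝ) δ)
    (h : vtL δ Ψ u = v) : u = vtInv (vt δ Ψ Ψinv) v := by
  obtain ⟨hm, he⟩ := vtInv_mem_and_eq H hv
  exact (vtL_anti H.hδ H.hΨm).injOn hu hm (h.trans he.symm)

lemma vtInv_antiOn : StrictAntiOn (vtInv (vt δ Ψ Ψinv)) (Icc 0 1) := by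
  intro a ha b hb hab
  obtain ⟨hma, hea⟩ := vtInv_mem_and_eq H ha
  obtain ⟨hmb, heb⟩ := vtInv_mem_and_eq H hb
  rcases lt_trichotomy (vtInv (vt δ Ψ Ψinv) b) (vtInv (vt δ Ψ Ψinv) a) with h | h | h
  · exact h
  · have : a = b := by rw [← hea, ← heb, h]
    exact absurd this hab.ne
  · have : b < a := by
      calc b = vtL δ Ψ (vtInv (vt δ Ψ Ψinv) b) := heb.symm
        _ < vtL δ Ψ (vtInv (vt δ Ψ Ψinv) a) := vtL_anti H.hδ H.hΨm hma hmb h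
        _ = a := hea
    linarith

lemma vtInv_zero : vtInv (vt δ Ψ Ψinv) 0 = δ :=
  (vtInv_unique H (by simp) (by simp [H.hδ.1.le]) (vtL_delta H.hδ.1 H.hΨ1)).symm

lemma vtInv_one : vtInv (vt δ Ψ Ψinv) 1 = 0 :=
  (vtInv_unique H (by simp) (by simp [H.hδ.1.le]) (vtL_zero H.hΨ0)).symm

lemma vtInv_mem_Ioo {v : ℝ} (hv : v ∈ Ioo (0:ℝ) 1) :
    vtInv (vt δ Ψ Ψinv) v ∈ Ioo (0:ℝ) δ := by
  have hvm : v ∈ Icc (0:ℝ) 1 := ⟨hv.1.le, hv.2.le⟩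
  constructor
  · have h1 := vtInv_antiOn H hvm (by simp) hv.2
    rw [vtInv_one H] at h1; exact h1
  · have h1 := vtInv_antiOn H (by simp) hvm hv.1
    rw [vtInv_zero H] at h1; exact h1

lemma vtInv_image : vtInv (vt δ Ψ Ψinv) '' Ioo 0 1 = Ioo 0 δ := by
  apply Subset.antisymm
  · rintro _ ⟨v, hv, rfl⟩; exact vtInv_mem_Ioo H hv
  · rintro u hu
    have hv : vtL δ Ψ u ∈ Ioo (0:ℝ) 1 := by
      constructor
      · have h1 := vtL_anti H.hδ H.hΨm ⟨hu.1.le, hu.2.le⟩ (by simp [H.hδ.1.le]) hu.2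
        rw [vtL_delta H.hδ.1 H.hΨ1] at h1; exact h1
      · have h1 := vtL_anti H.hδ H.hΨm (by simp [H.hδ.1.le]) ⟨hu.1.le, hu.2.le⟩ hu.1
        rw [vtL_zero H.hΨ0] at h1; exact h1
    exact ⟨vtL δ Ψ u, hv, (vtInv_unique H ⟨hv.1.le, hv.2.le⟩ ⟨hu.1.le, hu.2.le⟩ rfl).symm⟩


lemma hasDerivAt_vt {u : ℝ} (hu : u ∈ Ioo 0 δ) :
    HasDerivAt (vt δ Ψ Ψinv) (-1 - (1 - δ) * deriv Ψ (u / δ) / δ) u := by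
  have hδ0 := H.hδ.1
  have hne : u / δ ∈ Ioo (0:ℝ) 1 :=
    ⟨div_pos hu.1 hδ0, (div_lt_one hδ0).2 hu.2⟩
  have hΨ := H.hΨd _ hne
  have h1 : HasDerivAt (fun x : ℝ => Ψ (x / δ)) (deriv Ψ (u / δ) * (1 / δ)) u :=
    (hΨ.1.hasDerivAt).comp u ((hasDerivAt_id u).div_const δ)
  have h2 : HasDerivAt (vtL δ Ψ)
      ((0 - 1) - (1 - δ) * (deriv Ψ (u / δ) * (1 / δ))) u :=
    ((hasDerivAt_const u (1:ℝ)).sub (hasDerivAt_id u)).sub (h1.const_mul (1 - δ))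
  have h3 : vt δ Ψ Ψinv =ᶠ[nhds u] vtL δ Ψ := by
    filter_upwards [Iio_mem_nhds hu.2] with y hy
    exact vt_eq_left (le_of_lt hy)
  have h4 := h2.congr_of_eventuallyEq h3
  rw [show -1 - (1 - δ) * deriv Ψ (u / δ) / δ = 0 - 1 - (1 - δ) * (deriv Ψ (u / δ) * (1 / δ)) by ring]
  exact h4

lemma deriv_vt_lt {u : ℝ} (hu : u ∈ Ioo 0 δ) : deriv (vt δ Ψ Ψinv) u < -1 := by
  rw [(hasDerivAt_vt H hu).deriv]
  have hδ0 := H.hδ.1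
  have hne : u / δ ∈ Ioo (0:ℝ) 1 := ⟨div_pos hu.1 hδ0, (div_lt_one hδ0).2 hu.2⟩
  have hΨ := (H.hΨd _ hne).2
  have : 0 < (1 - δ) * deriv Ψ (u / δ) / δ :=
    div_pos (mul_pos (by linarith [H.hδ.2]) hΨ) hδ0
  linarith

lemma vtDelta_mem {v : ℝ} (hv : v ∈ Ioo (0:ℝ) 1) :
    vtDelta (vt δ Ψ Ψinv) v ∈ Ioo (0:ℝ) 1 := by
  have hd := deriv_vt_lt H (vtInv_mem_Ioo H hv)
  rw [vtDelta]
  set d := deriv (vt δ Ψ Ψinv) (vtInv (vt δ Ψ Ψinv) v) with hdd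
  have h1 : (0:ℝ) < -d := by linarith
  have hdne : d ≠ 0 := by linarith
  have e : -1 / d = 1 / (-d) := by field_simp
  rw [e]
  exact ⟨one_div_pos.2 h1, (div_lt_one h1).2 (by linarith)⟩

lemma continuousAt_vtInv {v : ℝ} (hv : v ∈ Ioo (0:ℝ) 1) :
    ContinuousAt (vtInv (vt δ Ψ Ψinv)) v := by
  have hmono : MonotoneOn (fun y => -(vtInv (vt δ Ψ Ψinv) y)) (Ioo 0 1) := by
    intro a ha b hb hab
    rcases eq_or_lt_of_le hab with rfl | h
    · exact le_refl _
    · exact neg_le_neg (vtInv_antiOn H ⟨ha.1.le, ha.2.le⟩ ⟨hb.1.le, hb.2.le⟩ h).le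
  have himg : (fun y => -(vtInv (vt δ Ψ Ψinv) y)) '' Ioo 0 1 = Ioo (-δ) 0 := by
    have : (fun y => -(vtInv (vt δ Ψ Ψinv) y)) = (fun x => -x) ∘ vtInv (vt δ Ψ Ψinv) := rfl
    rw [this, image_comp, vtInv_image H]
    ext x
    simp only [Set.mem_image, Set.mem_Ioo]
    constructor
    · rintro ⟨y, hy, rfl⟩; exact ⟨by linarith [hy.2], by linarith [hy.1]⟩
    · intro hx; exact ⟨-x, ⟨by linarith [hx.2], by linarith [hx.1]⟩, by ring⟩
  have hCA : ContinuousAt (fun y => -(vtInv (vt δ Ψ Ψinv) y)) v := by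
    apply continuousAt_of_monotoneOn_of_image_mem_nhds hmono (isOpen_Ioo.mem_nhds hv)
    rw [himg]
    have hm := vtInv_mem_Ioo H hv
    exact isOpen_Ioo.mem_nhds ⟨by linarith [hm.2], by linarith [hm.1]⟩
  have := hCA.neg
  exact this.congr (Filter.Eventually.of_forall fun y => neg_neg _)

lemma hasDerivAt_vtInv {v : ℝ} (hv : v ∈ Ioo (0:ℝ) 1) :
    HasDerivAt (vtInv (vt δ Ψ Ψinv)) (-(vtDelta (vt δ Ψ Ψinv) v)) v := by
  have hu := vtInv_mem_Ioo H hv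
  have hD := hasDerivAt_vt H hu
  have hne : deriv (vt δ Ψ Ψinv) (vtInv (vt δ Ψ Ψinv) v) ≠ 0 := by
    have := deriv_vt_lt H hu
    linarith
  have hfg : ∀ᶠ y in nhds v, vt δ Ψ Ψinv (vtInv (vt δ Ψ Ψinv) y) = y := by
    filter_upwards [isOpen_Ioo.mem_nhds hv] with y hy
    obtain ⟨hm, he⟩ := vtInv_mem_and_eq H ⟨hy.1.le, hy.2.le⟩
    rw [vt_eq_left hm.2]; exact he
  have hlt : -1 - (1 - δ) * deriv Ψ (vtInv (vt δ Ψ Ψinv) v / δ) / δ < -1 := by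
    have := deriv_vt_lt H hu
    rw [hD.deriv] at this; exact this
  have hne' : -1 - (1 - δ) * deriv Ψ (vtInv (vt δ Ψ Ψinv) v / δ) / δ ≠ 0 := by linarith
  have h := HasDerivAt.of_local_left_inverse (continuousAt_vtInv H hv) hD hne' hfg
  rw [show -(vtDelta (vt δ Ψ Ψinv) v) = (-1 - (1 - δ) * deriv Ψ (vtInv (vt δ Ψ Ψinv) v / δ) / δ)⁻¹ by
    rw [vtDelta, hD.deriv, neg_div, neg_neg, one_div]]
  exact h


lemma uR_spec {v : ℝ} (hv : v ∈ Ioo (0:ℝ) 1) :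
    v + vtInv (vt δ Ψ Ψinv) v ∈ Ioo δ 1 ∧
      vt δ Ψ Ψinv (v + vtInv (vt δ Ψ Ψinv) v) = v := by
  have hδ0 := H.hδ.1
  have hδ1 := H.hδ.2
  set u0 := vtInv (vt δ Ψ Ψinv) v with hu0
  have hu0m : u0 ∈ Ioo (0:ℝ) δ := vtInv_mem_Ioo H hv
  have he : vtL δ Ψ u0 = v := (vtInv_mem_and_eq H ⟨hv.1.le, hv.2.le⟩).2
  have htm : u0 / δ ∈ Ioo (0:ℝ) 1 := ⟨div_pos hu0m.1 hδ0, (div_lt_one hδ0).2 hu0m.2⟩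
  have hs : Ψ (u0 / δ) ∈ Ioo (0:ℝ) 1 := by
    constructor
    · have := H.hΨm ⟨le_refl 0, zero_le_one⟩ ⟨htm.1.le, htm.2.le⟩ htm.1
      rw [H.hΨ0] at this; exact this
    · have := H.hΨm ⟨htm.1.le, htm.2.le⟩ ⟨zero_le_one, le_refl 1⟩ htm.2
      rw [H.hΨ1] at this; exact this
  have hvu : v + u0 = 1 - (1 - δ) * Ψ (u0 / δ) := by
    rw [← he]; unfold vtL; ring
  have hmem : v + u0 ∈ Ioo δ 1 := by
    rw [hvu]
    constructor
    · nlinarith [hs.2]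
    · nlinarith [hs.1]
  refine ⟨hmem, ?_⟩
  rw [vt_eq_right (by push_neg; exact hmem.1)]
  have harg : (1 - (v + u0)) / (1 - δ) = Ψ (u0 / δ) := by
    rw [hvu]
    rw [show 1 - (1 - (1 - δ) * Ψ (u0 / δ)) = (1 - δ) * Ψ (u0 / δ) by ring,
      mul_comm, mul_div_assoc, div_self (by linarith : (1:ℝ) - δ ≠ 0), mul_one]
  rw [harg, (H.hΨinv _ ⟨htm.1.le, htm.2.le⟩).1]
  field_simp
  ring

lemma uR_image : (fun v => v + vtInv (vt δ Ψ Ψinv) v) '' Ioo 0 1 = Ioo δ 1 := by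
  have hδ0 := H.hδ.1
  have hδ1 := H.hδ.2
  apply Subset.antisymm
  · rintro _ ⟨v, hv, rfl⟩; exact (uR_spec H hv).1
  · rintro u hu
    have hy : (1 - u) / (1 - δ) ∈ Ioo (0:ℝ) 1 := by
      constructor
      · apply div_pos (by linarith [hu.2]) (by linarith)
      · rw [div_lt_one (by linarith)]; linarith [hu.1]
    obtain ⟨t, htm, hty⟩ := psi_surj H.hΨc H.hΨ0 H.hΨ1 ⟨hy.1.le, hy.2.le⟩
    have ht : t ∈ Ioo (0:ℝ) 1 := by
      constructor
      · rcases eq_or_lt_of_le htm.1 with h | h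
        · exfalso; rw [← h, H.hΨ0] at hty; exact hy.1.ne hty
        · exact h
      · rcases eq_or_lt_of_le htm.2 with h | h
        · exfalso; rw [h, H.hΨ1] at hty; exact hy.2.ne' hty
        · exact h
    set u0 := δ * t with hu0def
    have hu0m : u0 ∈ Ioo (0:ℝ) δ := by
      constructor
      · exact mul_pos hδ0 ht.1
      · nlinarith [ht.2]
    have htdiv : u0 / δ = t := by rw [hu0def, mul_comm, mul_div_assoc,
      div_self hδ0.ne', mul_one]
    set v := vtL δ Ψ u0 with hvdef
    have hvm : v ∈ Ioo (0:ℝ) 1 := by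
      rw [hvdef]
      unfold vtL
      rw [htdiv, hty]
      constructor
      · nlinarith [hy.2, hu0m.2]
      · nlinarith [hy.1, hu0m.1]
    have huL : vtInv (vt δ Ψ Ψinv) v = u0 :=
      (vtInv_unique H ⟨hvm.1.le, hvm.2.le⟩ ⟨hu0m.1.le, hu0m.2.le⟩ rfl).symm
    refine ⟨v, hvm, ?_⟩
    show v + vtInv (vt δ Ψ Ψinv) v = u
    rw [huL, hvdef]
    unfold vtL
    rw [htdiv, hty]
    have h2 : (1 - δ) * ((1 - u) / (1 - δ)) = 1 - u := by
      rw [mul_div_assoc', mul_comm, mul_div_assoc, div_self (by linarith : (1:ℝ) - δ ≠ 0),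
        mul_one]
    rw [hu0def]
    nlinarith [h2]

lemma uR_injOn : InjOn (fun v => v + vtInv (vt δ Ψ Ψinv) v) (Ioo 0 1) := by
  intro a ha b hb hab
  have h1 := (uR_spec H ha).2
  have h2 := (uR_spec H hb).2
  rw [← h1, ← h2]
  simp only [hab]


lemma vtm_eq {u : ℝ} (hu : u ∈ Icc (0:ℝ) 1) :
    vtm δ Ψ Ψinv u = vt δ Ψ Ψinv u := by
  have hδ0 := H.hδ.1; have hδ1 := H.hδ.2
  rw [vtm, if_pos hu, vt]
  by_cases h : u ≤ δ
  · rw [if_pos h, if_pos h, clamp_eq ⟨div_nonneg hu.1 hδ0.le, (div_le_one hδ0).2 h⟩]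
  · push_neg at h
    rw [if_neg (not_le.2 h), if_neg (not_le.2 h),
      clamp_eq ⟨div_nonneg (by linarith [hu.2]) (by linarith),
        by rw [div_le_one (by linarith)]; linarith⟩]

lemma uLext_anti : Antitone (uLext δ Ψ Ψinv) := by
  intro a b hab
  rcases eq_or_lt_of_le (clamp_mono hab) with h | h
  · rw [uLext, uLext, h]
  · exact ((vtInv_antiOn H) (clamp_mem a) (clamp_mem b) h).le

lemma measurable_uLext : Measurable (uLext δ Ψ Ψinv) :=
  (uLext_anti H).measurable

lemma measurable_DeltaE : Measurable (DeltaE δ Ψ Ψinv) :=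
  measurable_const.div ((measurable_deriv _).comp (measurable_uLext H))

lemma measurable_Tm : Measurable (Tm δ Ψ Ψinv) := by
  refine Measurable.ite ?_ ((measurable_uLext H).comp measurable_fst)
    (measurable_fst.add ((measurable_uLext H).comp measurable_fst))
  exact measurableSet_le measurable_snd ((measurable_DeltaE H).comp measurable_fst)

lemma psiInv_monoOn : MonotoneOn Ψinv (Icc 0 1) := by
  intro a ha b hb hab
  by_contra h
  push_neg at h
  have h1 := H.hΨm (psiInv_mem H.hΨc H.hΨ0 H.hΨ1 H.hΨinv hb) (psiInv_mem H.hΨc H.hΨ0 H.hΨ1 H.hΨinv ha) h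
  rw [(H.hΨinv a ha).2, (H.hΨinv b hb).2] at h1
  linarith

lemma measurable_vtm : Measurable (vtm δ Ψ Ψinv) := by
  have hΨe : Measurable (fun x => Ψ (clamp x)) := by
    apply Monotone.measurable
    intro a b hab
    rcases eq_or_lt_of_le (clamp_mono hab) with h | h
    · show Ψ (clamp a) ≤ Ψ (clamp b); rw [h]
    · exact (H.hΨm (clamp_mem a) (clamp_mem b) h).le
  have hΨie : Measurable (fun x => Ψinv (clamp x)) := by
    apply Monotone.measurable
    intro a b hab
    exact psiInv_monoOn H (clamp_mem a) (clamp_mem b) (clamp_mono hab)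
  refine Measurable.ite measurableSet_Icc ?_ measurable_const
  refine Measurable.ite (measurableSet_le measurable_id measurable_const) ?_ ?_
  · exact (measurable_const.sub measurable_id).sub
      (measurable_const.mul (hΨe.comp (measurable_id.div_const δ)))
  · exact measurable_id.sub (measurable_const.mul
      (hΨie.comp ((measurable_const.sub measurable_id).div_const (1 - δ))))

/-! change of variables -/

lemma hasDerivAt_uR {v : ℝ} (hv : v ∈ Ioo (0:ℝ) 1) :
    HasDerivAt (fun y => y + vtInv (vt δ Ψ Ψinv) y) (1 - vtDelta (vt δ Ψ Ψinv) v) v := by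
  have h := (hasDerivAt_id v).add (hasDerivAt_vtInv H hv)
  have h2 : (1:ℝ) - vtDelta (vt δ Ψ Ψinv) v = 1 + -vtDelta (vt δ Ψ Ψinv) v := by ring
  rw [h2]
  exact h

lemma icc_ae_eq_union :
    (Icc (0:ℝ) 1 : Set ℝ) =ᵐ[volume] ((Ioo (0:ℝ) δ ∪ Ioo δ 1 : Set ℝ)) := by
  have hδ0 := H.hδ.1; have hδ1 := H.hδ.2
  rw [MeasureTheory.ae_eq_set]
  constructor
  · apply measure_mono_null (t := ({0, δ, 1} : Set ℝ)) ?_ ((Set.toFinite _).measure_zero volume)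
    rintro x ⟨hx, hx2⟩
    simp only [mem_union, mem_Ioo, not_or, not_and, not_lt] at hx2
    simp only [mem_insert_iff, mem_singleton_iff]
    rcases lt_trichotomy x δ with h | h | h
    · left; by_contra h0
      have := hx2.1 (lt_of_le_of_ne hx.1 (Ne.symm h0)); linarith
    · right; left; exact h
    · right; right; by_contra h1
      have := hx2.2 h
      have h3 : x < 1 := lt_of_le_of_ne hx.2 h1
      linarith
  · have he : ((Ioo (0:ℝ) δ ∪ Ioo δ 1 : Set ℝ)) \ Icc 0 1 = ∅ := by
      rw [diff_eq_empty]
      apply union_subset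
      · exact fun x hx => ⟨hx.1.le, hx.2.le.trans hδ1.le⟩
      · exact fun x hx => ⟨hδ0.le.trans hx.1.le, hx.2.le⟩
    rw [he]; exact measure_empty

lemma lintegral_change (f : ℝ → ℝ≥0∞) :
    ∫⁻ u in Icc (0:ℝ) 1, f u =
      (∫⁻ v in Ioo (0:ℝ) 1, ENNReal.ofReal (vtDelta (vt δ Ψ Ψinv) v) * f (vtInv (vt δ Ψ Ψinv) v))
      + ∫⁻ v in Ioo (0:ℝ) 1,
          ENNReal.ofReal (1 - vtDelta (vt δ Ψ Ψinv) v) * f (v + vtInv (vt δ Ψ Ψinv) v) := by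
  have hδ01 : (0:ℝ) < δ ∧ δ < 1 := ⟨H.hδ.1, H.hδ.2⟩
  rw [setLIntegral_congr (icc_ae_eq_union H)]
  rw [lintegral_union measurableSet_Ioo (by
    apply Set.disjoint_left.2
    rintro x hx hx2
    exact absurd hx.2 (not_lt.2 hx2.1.le))]
  congr 1
  · rw [← vtInv_image H,
      lintegral_image_1d measurableSet_Ioo
        (fun x hx => (hasDerivAt_vtInv H hx).hasDerivWithinAt)
        (((vtInv_antiOn H).injOn).mono Ioo_subset_Icc_self) f]
    refine setLIntegral_congr_fun measurableSet_Ioo ?_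
    intro v hv
    dsimp only
    rw [abs_neg, abs_of_pos (vtDelta_mem H hv).1]
  · rw [← uR_image H,
      lintegral_image_1d measurableSet_Ioo
        (fun x hx => (hasDerivAt_uR H hx).hasDerivWithinAt)
        (uR_injOn H) f]
    refine setLIntegral_congr_fun measurableSet_Ioo ?_
    intro v hv
    dsimp only
    rw [abs_of_pos (by linarith [(vtDelta_mem H hv).2])]


lemma vt_vtInv {v : ℝ} (hv : v ∈ Icc (0:ℝ) 1) :
    vt δ Ψ Ψinv (vtInv (vt δ Ψ Ψinv) v) = v := by
  obtain ⟨hm, he⟩ := vtInv_mem_and_eq H hv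
  rw [vt_eq_left hm.2]; exact he

/-- the modified density-weight function -/
noncomputable def Fm (δ : ℝ) (Ψ Ψinv : ℝ → ℝ) (B : Set (ℝ × ℝ)) (v : ℝ) : ℝ≥0∞ :=
  ENNReal.ofReal (DeltaE δ Ψ Ψinv v) * B.indicator 1 (v, uLext δ Ψ Ψinv v)
  + ENNReal.ofReal (1 - DeltaE δ Ψ Ψinv v) * B.indicator 1 (v, v + uLext δ Ψ Ψinv v)

lemma core1 :
    Measure.map (fun p : ℝ × ℝ => (p.1, Tm δ Ψ Ψinv p))
        ((volume.restrict (Icc (0:ℝ) 1)).prod (volume.restrict (Icc (0:ℝ) 1)))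
      = Measure.map (fun u : ℝ => (vtm δ Ψ Ψinv u, u)) (volume.restrict (Icc (0:ℝ) 1)) := by
  have hmT : Measurable (fun p : ℝ × ℝ => (p.1, Tm δ Ψ Ψinv p)) :=
    measurable_fst.prodMk (measurable_Tm H)
  have hmS : Measurable (fun u : ℝ => (vtm δ Ψ Ψinv u, u)) :=
    (measurable_vtm H).prodMk measurable_id
  have haeIoo : ∀ᵐ v ∂(volume.restrict (Icc (0:ℝ) 1)), v ∈ Ioo (0:ℝ) 1 := by
    rw [ae_restrict_iff' measurableSet_Icc]
    have h0 : volume ({v : ℝ | ¬ (v ∈ Icc (0:ℝ) 1 → v ∈ Ioo (0:ℝ) 1)}) = 0 := by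
      apply measure_mono_null (t := ({0, 1} : Set ℝ))
      · intro v hv
        simp only [mem_setOf_eq, _root_.not_imp] at hv
        obtain ⟨hvI, hvn⟩ := hv
        simp only [mem_Ioo, not_and, not_lt] at hvn
        simp only [mem_insert_iff, mem_singleton_iff]
        rcases eq_or_lt_of_le hvI.1 with h | h
        · left; exact h.symm
        · right; exact le_antisymm hvI.2 (hvn h)
      · exact (Set.toFinite _).measure_zero volume
    exact h0
  ext B hB
  -- LHS
  rw [Measure.map_apply hmT hB, Measure.map_apply hmS hB]
  rw [Measure.prod_apply (hmT hB)]
  -- inner measure computation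
  have hinner : ∀ v ∈ Ioo (0:ℝ) 1,
      (volume.restrict (Icc (0:ℝ) 1)) (Prod.mk v ⁻¹' ((fun p : ℝ × ℝ => (p.1, Tm δ Ψ Ψinv p)) ⁻¹' B))
        = Fm δ Ψ Ψinv B v := by
    intro v hv
    have hvI : v ∈ Icc (0:ℝ) 1 := ⟨hv.1.le, hv.2.le⟩
    have hΔ := vtDelta_mem H hv
    have hset : Prod.mk v ⁻¹' ((fun p : ℝ × ℝ => (p.1, Tm δ Ψ Ψinv p)) ⁻¹' B)
        = {w : ℝ | (if w ≤ DeltaE δ Ψ Ψinv v then ((v, uLext δ Ψ Ψinv v) ∈ B)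
            else ((v, v + uLext δ Ψ Ψinv v) ∈ B))} := by
      ext w
      simp only [mem_preimage, mem_setOf_eq, Tm]
      by_cases h : w ≤ DeltaE δ Ψ Ψinv v <;> simp [h]
    rw [hset]
    by_cases hb1 : (v, uLext δ Ψ Ψinv v) ∈ B <;>
      by_cases hb2 : (v, v + uLext δ Ψ Ψinv v) ∈ B
    · have : {w : ℝ | (if w ≤ DeltaE δ Ψ Ψinv v then ((v, uLext δ Ψ Ψinv v) ∈ B)
            else ((v, v + uLext δ Ψ Ψinv v) ∈ B))} = univ := by
        ext w; by_cases h : w ≤ DeltaE δ Ψ Ψinv v <;> simp [h, hb1, hb2]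
      rw [this, Fm, indicator_of_mem hb1, indicator_of_mem hb2, DeltaE_eq hvI]
      simp only [Pi.one_apply, mul_one]
      rw [Measure.restrict_apply_univ, Real.volume_Icc]
      rw [← ENNReal.ofReal_add hΔ.1.le (by linarith [hΔ.2])]
      norm_num
    · have : {w : ℝ | (if w ≤ DeltaE δ Ψ Ψinv v then ((v, uLext δ Ψ Ψinv v) ∈ B)
            else ((v, v + uLext δ Ψ Ψinv v) ∈ B))} = Iic (DeltaE δ Ψ Ψinv v) := by
        ext w; by_cases h : w ≤ DeltaE δ Ψ Ψinv v <;> simp [h, hb1, hb2]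
      rw [this, Fm, indicator_of_mem hb1, indicator_of_notMem hb2, DeltaE_eq hvI]
      simp only [Pi.one_apply, mul_one, mul_zero, add_zero]
      rw [Measure.restrict_apply measurableSet_Iic]
      rw [show Iic (vtDelta (vt δ Ψ Ψinv) v) ∩ Icc 0 1 = Icc 0 (vtDelta (vt δ Ψ Ψinv) v) by
        ext x; simp only [mem_inter_iff, mem_Iic, mem_Icc]
        constructor
        · rintro ⟨h1, h2, h3⟩; exact ⟨h2, h1⟩
        · rintro ⟨h1, h2⟩; exact ⟨h2, h1, h2.trans hΔ.2.le⟩]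
      rw [Real.volume_Icc, sub_zero]
    · have : {w : ℝ | (if w ≤ DeltaE δ Ψ Ψinv v then ((v, uLext δ Ψ Ψinv v) ∈ B)
            else ((v, v + uLext δ Ψ Ψinv v) ∈ B))} = Ioi (DeltaE δ Ψ Ψinv v) := by
        ext w; by_cases h : w ≤ DeltaE δ Ψ Ψinv v <;> simp [h, hb1, hb2]
      rw [this, Fm, indicator_of_notMem hb1, indicator_of_mem hb2, DeltaE_eq hvI]
      simp only [Pi.one_apply, mul_one, mul_zero, zero_add]
      rw [Measure.restrict_apply measurableSet_Ioi]
      rw [show Ioi (vtDelta (vt δ Ψ Ψinv) v) ∩ Icc 0 1 = Ioc (vtDelta (vt δ Ψ Ψinv) v) 1 by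
        ext x; simp only [mem_inter_iff, mem_Ioi, mem_Icc, mem_Ioc]
        constructor
        · rintro ⟨h1, _, h3⟩; exact ⟨h1, h3⟩
        · rintro ⟨h1, h2⟩; exact ⟨h1, (hΔ.1.le.trans h1.le), h2⟩]
      rw [Real.volume_Ioc]
    · have : {w : ℝ | (if w ≤ DeltaE δ Ψ Ψinv v then ((v, uLext δ Ψ Ψinv v) ∈ B)
            else ((v, v + uLext δ Ψ Ψinv v) ∈ B))} = ∅ := by
        ext w; by_cases h : w ≤ DeltaE δ Ψ Ψinv v <;> simp [h, hb1, hb2]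
      rw [this, Fm, indicator_of_notMem hb1, indicator_of_notMem hb2]
      simp
  -- LHS equals integral of Fm over Icc
  have hLHS : ∫⁻ v, (volume.restrict (Icc (0:ℝ) 1))
        (Prod.mk v ⁻¹' ((fun p : ℝ × ℝ => (p.1, Tm δ Ψ Ψinv p)) ⁻¹' B))
        ∂(volume.restrict (Icc (0:ℝ) 1))
      = ∫⁻ v in Icc (0:ℝ) 1, Fm δ Ψ Ψinv B v := by
    refine lintegral_congr_ae ?_
    filter_upwards [haeIoo] with v hv
    exact hinner v hv
  rw [hLHS]
  -- RHS rewrite as lintegral of indicator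
  have hindm : Measurable (B.indicator (1 : ℝ × ℝ → ℝ≥0∞)) := measurable_one.indicator hB
  have hRHS : (volume.restrict (Icc (0:ℝ) 1)) ((fun u : ℝ => (vtm δ Ψ Ψinv u, u)) ⁻¹' B)
      = ∫⁻ u in Icc (0:ℝ) 1, B.indicator 1 (vtm δ Ψ Ψinv u, u) := by
    rw [← lintegral_indicator_one (hmS hB)]
    refine lintegral_congr fun u => ?_
    by_cases h : (vtm δ Ψ Ψinv u, u) ∈ B <;>
      simp [Set.indicator, h, Set.mem_preimage]
  rw [hRHS, lintegral_change H (fun u => B.indicator 1 (vtm δ Ψ Ψinv u, u))]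
  -- identify the two pieces
  have hmeas1 : Measurable fun v => ENNReal.ofReal (DeltaE δ Ψ Ψinv v)
      * B.indicator 1 (v, uLext δ Ψ Ψinv v) :=
    ((measurable_DeltaE H).ennreal_ofReal).mul
      (hindm.comp (measurable_id.prodMk (measurable_uLext H)))
  have hsplit : ∫⁻ v in Icc (0:ℝ) 1, Fm δ Ψ Ψinv B v
      = (∫⁻ v in Icc (0:ℝ) 1, ENNReal.ofReal (DeltaE δ Ψ Ψinv v)
            * B.indicator 1 (v, uLext δ Ψ Ψinv v))
        + ∫⁻ v in Icc (0:ℝ) 1, ENNReal.ofReal (1 - DeltaE δ Ψ Ψinv v)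
            * B.indicator 1 (v, v + uLext δ Ψ Ψinv v) := by
    rw [← lintegral_add_left hmeas1]
    rfl
  rw [hsplit]
  congr 1
  · rw [← setLIntegral_congr (MeasureTheory.Ioo_ae_eq_Icc (μ := (volume : Measure ℝ)) (a := (0:ℝ)) (b := (1:ℝ)))]
    refine setLIntegral_congr_fun measurableSet_Ioo ?_
    intro v hv
    dsimp only
    have hvI : v ∈ Icc (0:ℝ) 1 := ⟨hv.1.le, hv.2.le⟩
    have hm := (vtInv_mem_and_eq H hvI).1
    rw [DeltaE_eq hvI, uLext_eq hvI,
      vtm_eq H ⟨hm.1, hm.2.trans H.hδ.2.le⟩, vt_vtInv H hvI]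
  · rw [← setLIntegral_congr (MeasureTheory.Ioo_ae_eq_Icc (μ := (volume : Measure ℝ)) (a := (0:ℝ)) (b := (1:ℝ)))]
    refine setLIntegral_congr_fun measurableSet_Ioo ?_
    intro v hv
    dsimp only
    have hvI : v ∈ Icc (0:ℝ) 1 := ⟨hv.1.le, hv.2.le⟩
    obtain ⟨hmem, heq⟩ := uR_spec H hv
    rw [DeltaE_eq hvI, uLext_eq hvI,
      vtm_eq H ⟨(H.hδ.1.le.trans hmem.1.le), hmem.2.le⟩, heq]


end WithH

lemma restrict_pi_eq (d : ℕ) :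
    (volume : Measure (Fin d → ℝ)).restrict (univ.pi fun _ => Icc (0:ℝ) 1)
      = Measure.pi (fun _ : Fin d => (volume : Measure ℝ).restrict (Icc (0:ℝ) 1)) := by
  refine (Measure.pi_eq fun s hs => ?_).symm
  rw [Measure.restrict_apply (MeasurableSet.univ_pi hs), ← Set.pi_inter_distrib,
    volume_pi, Measure.pi_pi]
  exact Finset.prod_congr rfl fun i _ =>
    (Measure.restrict_apply (hs i)).symm


/-- abstract product step : given a 1-d pushforward identity, lift it to d coordinates. -/
lemma core_d {Tm : ℝ × ℝ → ℝ} {vtm : ℝ → ℝ}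
    (hmT : Measurable Tm) (hmS : Measurable vtm)
    (h1 : Measure.map (fun p : ℝ × ℝ => (p.1, Tm p))
        (((volume : Measure ℝ).restrict (Icc (0:ℝ) 1)).prod
          ((volume : Measure ℝ).restrict (Icc (0:ℝ) 1)))
      = Measure.map (fun u : ℝ => (vtm u, u)) ((volume : Measure ℝ).restrict (Icc (0:ℝ) 1)))
    (d : ℕ) :
    Measure.map (fun p : (Fin d → ℝ) × (Fin d → ℝ) =>
        (p.1, fun i => Tm (p.1 i, p.2 i)))
      (((volume : Measure (Fin d → ℝ)).restrict (univ.pi fun _ => Icc (0:ℝ) 1)).prod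
        ((volume : Measure (Fin d → ℝ)).restrict (univ.pi fun _ => Icc (0:ℝ) 1)))
    = Measure.map (fun u : Fin d → ℝ => (fun i => vtm (u i), u))
        ((volume : Measure (Fin d → ℝ)).restrict (univ.pi fun _ => Icc (0:ℝ) 1)) := by
  set lamI : Measure ℝ := (volume : Measure ℝ).restrict (Icc (0:ℝ) 1) with hlamI
  haveI : IsFiniteMeasure lamI := by
    constructor
    rw [hlamI, Measure.restrict_apply_univ]
    exact measure_Icc_lt_top
  set ν1 : Measure (ℝ × ℝ) := Measure.map (fun u : ℝ => (vtm u, u)) lamI with hν1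
  have hmS2 : Measurable (fun u : ℝ => (vtm u, u)) := hmS.prodMk measurable_id
  haveI : IsFiniteMeasure ν1 := by
    constructor
    rw [hν1, Measure.map_apply hmS2 MeasurableSet.univ]
    exact measure_lt_top _ _
  rw [restrict_pi_eq]
  set e := MeasurableEquiv.arrowProdEquivProdArrow ℝ ℝ (Fin d) with he
  have h2 : MeasurePreserving e
      (Measure.pi fun _ : Fin d => lamI.prod lamI)
      ((Measure.pi fun _ : Fin d => lamI).prod (Measure.pi fun _ : Fin d => lamI)) :=
    measurePreserving_arrowProdEquivProdArrow ℝ ℝ (Fin d) (fun _ => lamI) (fun _ => lamI)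
  have hC : MeasurePreserving (fun x : Fin d → ℝ × ℝ => fun i => ((x i).1, Tm (x i)))
      (Measure.pi fun _ : Fin d => lamI.prod lamI) (Measure.pi fun _ : Fin d => ν1) := by
    have := measurePreserving_pi (fun _ : Fin d => lamI.prod lamI) (fun _ : Fin d => ν1)
      (f := fun _ : Fin d => fun q : ℝ × ℝ => (q.1, Tm q))
      (fun i => ⟨measurable_fst.prodMk hmT, h1⟩)
    convert this using 2
  have hS : MeasurePreserving (fun y : Fin d → ℝ => fun i => (vtm (y i), y i))
      (Measure.pi fun _ : Fin d => lamI) (Measure.pi fun _ : Fin d => ν1) :=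
    measurePreserving_pi (fun _ : Fin d => lamI) (fun _ : Fin d => ν1)
      (f := fun _ : Fin d => fun u : ℝ => (vtm u, u))
      (fun i => ⟨hmS.prodMk measurable_id, rfl⟩)
  have hGm : Measurable (fun p : (Fin d → ℝ) × (Fin d → ℝ) =>
      (p.1, fun i => Tm (p.1 i, p.2 i))) := by
    refine measurable_fst.prodMk (measurable_pi_lambda _ fun i => ?_)
    exact hmT.comp (((measurable_pi_apply i).comp measurable_fst).prodMk
      ((measurable_pi_apply i).comp measurable_snd))
  have hΦm : Measurable (fun u : Fin d → ℝ => ((fun i => vtm (u i), u))) :=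
    (measurable_pi_lambda _ fun i => hmS.comp (measurable_pi_apply i)).prodMk measurable_id
  have hcomp1 : (fun p : (Fin d → ℝ) × (Fin d → ℝ) => (p.1, fun i => Tm (p.1 i, p.2 i))) ∘ e
      = e ∘ (fun x : Fin d → ℝ × ℝ => fun i => ((x i).1, Tm (x i))) := by
    funext x
    simp only [Function.comp_apply, he, MeasurableEquiv.arrowProdEquivProdArrow,
      Equiv.arrowProdEquivProdArrow, MeasurableEquiv.coe_mk, Equiv.coe_fn_mk]
  have hcomp2 : e ∘ (fun y : Fin d → ℝ => fun i => (vtm (y i), y i))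
      = fun u : Fin d → ℝ => ((fun i => vtm (u i), u)) := by
    funext y
    simp only [Function.comp_apply, he, MeasurableEquiv.arrowProdEquivProdArrow,
      Equiv.arrowProdEquivProdArrow, MeasurableEquiv.coe_mk, Equiv.coe_fn_mk]
  calc Measure.map (fun p : (Fin d → ℝ) × (Fin d → ℝ) => (p.1, fun i => Tm (p.1 i, p.2 i)))
        ((Measure.pi fun _ : Fin d => lamI).prod (Measure.pi fun _ : Fin d => lamI))
      = Measure.map (fun p : (Fin d → ℝ) × (Fin d → ℝ) => (p.1, fun i => Tm (p.1 i, p.2 i)))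
          (Measure.map e (Measure.pi fun _ : Fin d => lamI.prod lamI)) := by rw [h2.map_eq]
    _ = Measure.map ((fun p : (Fin d → ℝ) × (Fin d → ℝ) =>
          (p.1, fun i => Tm (p.1 i, p.2 i))) ∘ e) (Measure.pi fun _ : Fin d => lamI.prod lamI) :=
        Measure.map_map hGm e.measurable
    _ = Measure.map (e ∘ (fun x : Fin d → ℝ × ℝ => fun i => ((x i).1, Tm (x i))))
          (Measure.pi fun _ : Fin d => lamI.prod lamI) := by rw [hcomp1]
    _ = Measure.map e (Measure.map (fun x : Fin d → ℝ × ℝ => fun i => ((x i).1, Tm (x i)))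
          (Measure.pi fun _ : Fin d => lamI.prod lamI)) :=
        (Measure.map_map e.measurable hC.measurable).symm
    _ = Measure.map e (Measure.pi fun _ : Fin d => ν1) := by rw [hC.map_eq]
    _ = Measure.map e (Measure.map (fun y : Fin d → ℝ => fun i => (vtm (y i), y i))
          (Measure.pi fun _ : Fin d => lamI)) := by rw [hS.map_eq]
    _ = Measure.map (e ∘ (fun y : Fin d → ℝ => fun i => (vtm (y i), y i)))
          (Measure.pi fun _ : Fin d => lamI) := Measure.map_map e.measurable hS.measurable
    _ = Measure.map (fun u : Fin d → ℝ => ((fun i => vtm (u i), u)))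
          (Measure.pi fun _ : Fin d => lamI) := by rw [hcomp2]


end VTProof

theorem stmt_5 {Ω : Type*} [MeasurableSpace Ω] (P : Measure Ω) [IsProbabilityMeasure P]
    (δ : ℝ) (hδ : δ ∈ Set.Ioo (0:ℝ) 1) (Ψ Ψinv : ℝ → ℝ)
    (hΨc : ContinuousOn Ψ (Set.Icc 0 1)) (hΨm : StrictMonoOn Ψ (Set.Icc 0 1))
    (hΨ0 : Ψ 0 = 0) (hΨ1 : Ψ 1 = 1)
    (hΨinv : ∀ x ∈ Set.Icc (0:ℝ) 1, Ψinv (Ψ x) = x ∧ Ψ (Ψinv x) = x)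
    (hΨd : ∀ x ∈ Set.Ioo (0:ℝ) 1, DifferentiableAt ℝ Ψ x ∧ 0 < deriv Ψ x)
    (d : ℕ) (hd : 1 ≤ d)
    (V : Ω → Fin d → ℝ) (hVm : Measurable V)
    (W : Ω → Fin d → ℝ) (hWm : Measurable W)
    (cV : (Fin d → ℝ) → ℝ) (hcVm : Measurable cV)
    -- the law of `V` has density `cV` w.r.t. Lebesgue measure on `[0,1]^d`
    (hVlaw : Measure.map V P
      = (volume.restrict (Set.univ.pi fun _ : Fin d => Set.Icc (0:ℝ) 1)).withDensity
          fun x => ENNReal.ofReal (cV x))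
    -- one-dimensional margins of `V` are uniform
    (hVmarg : ∀ i, Measure.map (fun ω => V ω i) P = volume.restrict (Set.Icc (0:ℝ) 1))
    -- `W₁,…,W_d` are i.i.d. uniform on `[0,1]` and independent of `V`
    (hW : Measure.map (fun ω => (V ω, W ω)) P
      = (Measure.map V P).prod
          (volume.restrict (Set.univ.pi fun _ : Fin d => Set.Icc (0:ℝ) 1))) :
    -- the law of `U` with `Uᵢ = 𝒱⁻¹ₛ(Vᵢ, Wᵢ)` has density `u ↦ c_V(𝒱(u₁),…,𝒱(u_d))`
    Measure.map (fun ω i => vtSInv (vt δ Ψ Ψinv) (V ω i) (W ω i)) P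
      = (volume.restrict (Set.univ.pi fun _ : Fin d => Set.Icc (0:ℝ) 1)).withDensity
          fun u => ENNReal.ofReal (cV fun i => vt δ Ψ Ψinv (u i)) := by
  have H : VTProof.Hyp δ Ψ Ψinv := ⟨hδ, hΨc, hΨm, hΨ0, hΨ1, hΨinv, hΨd⟩
  have hSm : MeasurableSet (Set.univ.pi fun _ : Fin d => Set.Icc (0:ℝ) 1) :=
    MeasurableSet.univ_pi fun _ => measurableSet_Icc
  have hGmm : Measurable (fun p : (Fin d → ℝ) × (Fin d → ℝ) =>
      fun i => VTProof.Tm δ Ψ Ψinv (p.1 i, p.2 i)) := by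
    refine measurable_pi_lambda _ fun i => ?_
    exact (VTProof.measurable_Tm H).comp (((measurable_pi_apply i).comp measurable_fst).prodMk
      ((measurable_pi_apply i).comp measurable_snd))
  have hcVbm : Measurable (fun x : Fin d → ℝ => ENNReal.ofReal (cV x)) :=
    hcVm.ennreal_ofReal
  -- a.e. V ω ∈ [0,1]^d
  have hmap0 : Measure.map V P (Set.univ.pi fun _ : Fin d => Set.Icc (0:ℝ) 1)ᶜ = 0 := by
    rw [hVlaw, withDensity_apply _ hSm.compl, Measure.restrict_restrict hSm.compl,
      Set.compl_inter_self, Measure.restrict_empty, lintegral_zero_measure]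
  have hVae : ∀ᵐ ω ∂P, V ω ∈ (Set.univ.pi fun _ : Fin d => Set.Icc (0:ℝ) 1) := by
    have h0 : P (V ⁻¹' (Set.univ.pi fun _ : Fin d => Set.Icc (0:ℝ) 1)ᶜ) = 0 := by
      rw [← Measure.map_apply hVm hSm.compl]; exact hmap0
    filter_upwards [measure_eq_zero_iff_ae_notMem.1 h0] with ω hω
    simpa using hω
  have hae : (fun ω i => vtSInv (vt δ Ψ Ψinv) (V ω i) (W ω i)) =ᵐ[P]
      fun ω => (fun i => VTProof.Tm δ Ψ Ψinv (V ω i, W ω i)) := by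
    filter_upwards [hVae] with ω hω
    funext i
    exact (VTProof.Tm_eq (hω i (Set.mem_univ i)) (W ω i)).symm
  rw [Measure.map_congr hae]
  have hmapmap : Measure.map (fun ω => (fun i => VTProof.Tm δ Ψ Ψinv (V ω i, W ω i))) P
      = Measure.map (fun p : (Fin d → ℝ) × (Fin d → ℝ) => fun i => VTProof.Tm δ Ψ Ψinv (p.1 i, p.2 i))
          (Measure.map (fun ω => (V ω, W ω)) P) :=
    (Measure.map_map hGmm (hVm.prodMk hWm)).symm
  rw [hmapmap, hW, hVlaw]
  -- notation
  ext A hA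
  have hindm : Measurable (A.indicator (1 : (Fin d → ℝ) → ℝ≥0∞)) := measurable_one.indicator hA
  rw [Measure.map_apply hGmm hA, Measure.prod_apply (hGmm hA)]
  have hsec : Measurable fun x : Fin d → ℝ =>
      (volume.restrict (Set.univ.pi fun _ : Fin d => Set.Icc (0:ℝ) 1))
        (Prod.mk x ⁻¹' ((fun p : (Fin d → ℝ) × (Fin d → ℝ) =>
          fun i => VTProof.Tm δ Ψ Ψinv (p.1 i, p.2 i)) ⁻¹' A)) :=
    measurable_measure_prodMk_left (hGmm hA)
  rw [lintegral_withDensity_eq_lintegral_mul _ hcVbm hsec]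
  -- rewrite as double integral of pointwise product
  have hfm : Measurable (fun p : (Fin d → ℝ) × (Fin d → ℝ) =>
      ENNReal.ofReal (cV p.1) * A.indicator 1 (fun i => VTProof.Tm δ Ψ Ψinv (p.1 i, p.2 i))) :=
    (hcVbm.comp measurable_fst).mul (hindm.comp hGmm)
  have hdouble : ∫⁻ x, ENNReal.ofReal (cV x) *
        ((volume.restrict (Set.univ.pi fun _ : Fin d => Set.Icc (0:ℝ) 1))
          (Prod.mk x ⁻¹' ((fun p : (Fin d → ℝ) × (Fin d → ℝ) =>
            fun i => VTProof.Tm δ Ψ Ψinv (p.1 i, p.2 i)) ⁻¹' A)))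
        ∂(volume.restrict (Set.univ.pi fun _ : Fin d => Set.Icc (0:ℝ) 1))
      = ∫⁻ p, ENNReal.ofReal (cV p.1) * A.indicator 1 (fun i => VTProof.Tm δ Ψ Ψinv (p.1 i, p.2 i))
          ∂((volume.restrict (Set.univ.pi fun _ : Fin d => Set.Icc (0:ℝ) 1)).prod
            (volume.restrict (Set.univ.pi fun _ : Fin d => Set.Icc (0:ℝ) 1))) := by
    rw [lintegral_prod _ hfm.aemeasurable]
    refine (lintegral_congr fun x => ?_).symm
    have hsecx : MeasurableSet (Prod.mk x ⁻¹' ((fun p : (Fin d → ℝ) × (Fin d → ℝ) =>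
        fun i => VTProof.Tm δ Ψ Ψinv (p.1 i, p.2 i)) ⁻¹' A)) :=
      measurable_prodMk_left (hGmm hA)
    have hTx : Measurable (fun y : Fin d → ℝ => fun i => VTProof.Tm δ Ψ Ψinv (x i, y i)) :=
      measurable_pi_lambda _ fun i =>
        (VTProof.measurable_Tm H).comp (measurable_const.prodMk (measurable_pi_apply i))
    have hfy : Measurable fun y : Fin d → ℝ =>
        A.indicator (1 : (Fin d → ℝ) → ℝ≥0∞) (fun i => VTProof.Tm δ Ψ Ψinv (x i, y i)) :=
      hindm.comp hTx
    show ∫⁻ y in (Set.univ.pi fun _ : Fin d => Set.Icc (0:ℝ) 1),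
        ENNReal.ofReal (cV x) * A.indicator 1 (fun i => VTProof.Tm δ Ψ Ψinv (x i, y i)) ∂volume = _
    rw [lintegral_const_mul _ hfy]
    congr 1
    rw [← lintegral_indicator_one hsecx]
    refine lintegral_congr fun y => ?_
    by_cases h : (fun i => VTProof.Tm δ Ψ Ψinv (x i, y i)) ∈ A <;>
      simp [Set.indicator, h, Set.mem_preimage]
  simp only [Pi.mul_apply]
  rw [hdouble]
  have hmapG : Measurable (fun p : (Fin d → ℝ) × (Fin d → ℝ) =>
      (p.1, fun i => VTProof.Tm δ Ψ Ψinv (p.1 i, p.2 i))) := measurable_fst.prodMk hGmm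
  have hq : Measurable (fun q : (Fin d → ℝ) × (Fin d → ℝ) =>
      ENNReal.ofReal (cV q.1) * A.indicator 1 q.2) :=
    (hcVbm.comp measurable_fst).mul (hindm.comp measurable_snd)
  have h6 : ∫⁻ p, ENNReal.ofReal (cV p.1)
        * A.indicator 1 (fun i => VTProof.Tm δ Ψ Ψinv (p.1 i, p.2 i))
        ∂((volume.restrict (Set.univ.pi fun _ : Fin d => Set.Icc (0:ℝ) 1)).prod
          (volume.restrict (Set.univ.pi fun _ : Fin d => Set.Icc (0:ℝ) 1)))
      = ∫⁻ q, ENNReal.ofReal (cV q.1) * A.indicator 1 q.2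
          ∂(Measure.map (fun p : (Fin d → ℝ) × (Fin d → ℝ) =>
              (p.1, fun i => VTProof.Tm δ Ψ Ψinv (p.1 i, p.2 i)))
            ((volume.restrict (Set.univ.pi fun _ : Fin d => Set.Icc (0:ℝ) 1)).prod
              (volume.restrict (Set.univ.pi fun _ : Fin d => Set.Icc (0:ℝ) 1)))) :=
    (lintegral_map hq hmapG).symm
  rw [h6, VTProof.core_d (VTProof.measurable_Tm H) (VTProof.measurable_vtm H) (VTProof.core1 H) d]
  have hΦm : Measurable (fun u : Fin d → ℝ => ((fun i => VTProof.vtm δ Ψ Ψinv (u i), u))) :=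
    (measurable_pi_lambda _ fun i =>
      (VTProof.measurable_vtm H).comp (measurable_pi_apply i)).prodMk measurable_id
  rw [lintegral_map hq hΦm]
  rw [withDensity_apply _ hA]
  have h7 : ∀ u : Fin d → ℝ, ENNReal.ofReal (cV (fun i => VTProof.vtm δ Ψ Ψinv (u i)))
      * A.indicator 1 u
      = A.indicator (fun u => ENNReal.ofReal (cV (fun i => VTProof.vtm δ Ψ Ψinv (u i)))) u := by
    intro u
    by_cases h : u ∈ A <;> simp [Set.indicator, h]
  rw [lintegral_congr h7, lintegral_indicator hA]
  refine lintegral_congr_ae (ae_restrict_of_ae ?_)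
  filter_upwards [ae_restrict_mem hSm] with u hu
  congr 1
  refine congrArg cV (funext fun i => ?_)
  exact VTProof.vtm_eq H (hu i (Set.mem_univ i))
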